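/- Let G_q = ⟨x, y | x² = y^q⟩ with q > 0 odd be the group of the (2,q) torus knot. For 0 < t < 1 and ℓ ∈ {1, …, (q-1)/2}, the assignments x ↦ i and y ↦ cos((2ℓ-1)π/q) + sin((2ℓ-1)π/q)(cos(πt)·i + sin(πt)·j) define a group homomorphism ρ_{ℓ,t} : G_q → SU(2), and this representation is irreducible (its image is non-abelian). -/

import Mathlib

set_option maxHeartbeats 1000000


/-- The relation `x² y^{-q}` of the `(2,q)` torus knot group `G_q = ⟨x, y ∣ x² = y^q⟩`;
`x` is `FreeGroup.of true`, `y` is `FreeGroup.of false`. -/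
def torusRels (q : ℕ) : Set (FreeGroup Bool) :=
  {FreeGroup.of true ^ 2 * (FreeGroup.of false ^ q)⁻¹}

/-- The `(2,q)` torus knot group `G_q = ⟨x, y ∣ x² = y^q⟩`. -/
def TorusGroup (q : ℕ) := PresentedGroup (torusRels q)

instance (q : ℕ) : Group (TorusGroup q) := by unfold TorusGroup; infer_instance

open Quaternion Real Metric in
/-- for `q > 0` odd, `0 < t < 1` and `1 ≤ ℓ ≤ (q-1)/2`, the assignments
`x ↦ i` and `y ↦ cos((2ℓ-1)π/q) + sin((2ℓ-1)π/q)(cos(πt)·i + sin(πt)·j)` define a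
representation `ρ_{ℓ,t} : G_q → SU(2)` (unit quaternions), and this representation is
irreducible (non-abelian image). -/
theorem stmt_16 (q : ℕ) (hq : Odd q) (hq0 : 0 < q)
    (ℓ : ℕ) (hℓ1 : 1 ≤ ℓ) (hℓ2 : ℓ ≤ (q - 1) / 2)
    (t : ℝ) (ht0 : 0 < t) (ht1 : t < 1) :
    ∃ φ : TorusGroup q →* Quaternion ℝ,
      φ (PresentedGroup.of true) = (⟨0, 1, 0, 0⟩ : Quaternion ℝ) ∧
      φ (PresentedGroup.of false) =
        (⟨Real.cos ((2 * ℓ - 1) * Real.pi / q),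
          Real.sin ((2 * ℓ - 1) * Real.pi / q) * Real.cos (Real.pi * t),
          Real.sin ((2 * ℓ - 1) * Real.pi / q) * Real.sin (Real.pi * t), 0⟩ : Quaternion ℝ) ∧
      (∀ g, ‖φ g‖ = 1) ∧
      ¬ (∀ g h : TorusGroup q, φ g * φ h = φ h * φ g) := by
  -- basic arithmetic facts
  have h2ℓ : 2 * ℓ ≤ q - 1 := by
    have := (Nat.le_div_iff_mul_le (by norm_num : 0 < 2)).mp hℓ2
    omega
  have hq3 : 3 ≤ q := by omega
  set m : ℕ := 2 * ℓ - 1 with hm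
  have hmR : (m : ℝ) = 2 * ℓ - 1 := by
    have : (m : ℕ) + 1 = 2 * ℓ := by omega
    have := congrArg (fun n : ℕ => (n : ℝ)) this
    push_cast at this
    linarith
  have hmodd : Odd m := ⟨ℓ - 1, by omega⟩
  have hqR : (0 : ℝ) < q := by exact_mod_cast hq0
  set θ : ℝ := (2 * ℓ - 1) * Real.pi / q with hθ
  have hθpos : 0 < θ := by
    apply div_pos (mul_pos _ Real.pi_pos) hqR
    rw [← hmR]
    have : 1 ≤ m := by omega
    exact_mod_cast this
  have hθlt : θ < Real.pi := by
    rw [hθ, div_lt_iff₀ hqR, ← hmR]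
    have hmq : m < q := by omega
    have : (m : ℝ) < q := by exact_mod_cast hmq
    nlinarith [Real.pi_pos]
  have hs : 0 < Real.sin θ := Real.sin_pos_of_pos_of_lt_pi hθpos hθlt
  have hb : 0 < Real.sin (Real.pi * t) := by
    apply Real.sin_pos_of_pos_of_lt_pi (mul_pos Real.pi_pos ht0)
    nlinarith [Real.pi_pos]
  -- the quaternions
  set a : ℝ := Real.cos (Real.pi * t) with ha
  set b : ℝ := Real.sin (Real.pi * t) with hbdef
  set c : ℝ := Real.cos θ with hc
  set s : ℝ := Real.sin θ with hsdef
  have hab : a ^ 2 + b ^ 2 = 1 := by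
    rw [ha, hbdef]; nlinarith [Real.sin_sq_add_cos_sq (Real.pi * t)]
  have hcs : c ^ 2 + s ^ 2 = 1 := by
    rw [hc, hsdef]; nlinarith [Real.sin_sq_add_cos_sq θ]
  set u : Quaternion ℝ := ⟨0, a, b, 0⟩ with hu
  have huu : u * u = -1 := by
    rw [hu]
    show (⟨0, a, b, 0⟩ : Quaternion ℝ) * ⟨0, a, b, 0⟩ = -1
    ext <;>
      simp [Quaternion.re_mul, Quaternion.imI_mul, Quaternion.imJ_mul, Quaternion.imK_mul, QuaternionAlgebra.mk_mul_mk] <;>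
      nlinarith
  set X : Quaternion ℝ := ⟨0, 1, 0, 0⟩ with hX
  set Y : Quaternion ℝ := ⟨c, s * a, s * b, 0⟩ with hY
  have hX2 : X ^ 2 = -1 := by
    rw [sq, hX]
    show (⟨0, 1, 0, 0⟩ : Quaternion ℝ) * ⟨0, 1, 0, 0⟩ = -1
    ext <;>
      simp [Quaternion.re_mul, Quaternion.imI_mul, Quaternion.imJ_mul, Quaternion.imK_mul, QuaternionAlgebra.mk_mul_mk]
  -- Y is the image of exp(θ i) under the lift ℂ →ₐ[ℝ] ℍ
  have hfY : Complex.liftAux u huu (Complex.exp (θ * Complex.I)) = Y := by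
    rw [Complex.liftAux_apply, hu, hY]
    show algebraMap ℝ ℍ[ℝ,-1,0,-1] (Complex.exp (θ * Complex.I)).re + (Complex.exp (θ * Complex.I)).im • (⟨0, a, b, 0⟩ : ℍ[ℝ,-1,0,-1]) = (⟨c, s * a, s * b, 0⟩ : ℍ[ℝ,-1,0,-1])
    ext <;>
      simp only [Quaternion.re_add, Quaternion.imI_add, Quaternion.imJ_add, Quaternion.imK_add,
        Quaternion.re_coe, Quaternion.imI_coe, Quaternion.imJ_coe, Quaternion.imK_coe,
        Quaternion.re_smul, Quaternion.imI_smul, Quaternion.imJ_smul, Quaternion.imK_smul,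
        Quaternion.algebraMap_def, Complex.exp_ofReal_mul_I_re, Complex.exp_ofReal_mul_I_im,
        smul_eq_mul, smul_zero] <;>
      simp [hc, hsdef]
  have hzq : Complex.exp (θ * Complex.I) ^ q = -1 := by
    rw [← Complex.exp_nat_mul]
    have hqθ : (q : ℝ) * θ = m * Real.pi := by
      rw [hθ, hmR]; field_simp
    have : (q : ℂ) * (θ * Complex.I) = m * (Real.pi * Complex.I) := by
      have := congrArg (fun x : ℝ => (x : ℂ)) hqθ
      push_cast at this
      rw [show (q : ℂ) * (θ * Complex.I) = ((q : ℂ) * θ) * Complex.I by ring, this]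
      ring
    rw [this, Complex.exp_nat_mul, Complex.exp_pi_mul_I, hmodd.neg_one_pow]
  have hYq : Y ^ q = -1 := by
    rw [← hfY, ← map_pow, hzq, map_neg, map_one]
  -- norms
  have hXmem : X ∈ sphere (0 : Quaternion ℝ) 1 := by
    rw [mem_sphere_zero_iff_norm]
    have h1 : normSq X = 1 := by rw [Quaternion.normSq_def', hX]; norm_num
    have h2 := Quaternion.normSq_eq_norm_mul_self X
    nlinarith [norm_nonneg X]
  have hYmem : Y ∈ sphere (0 : Quaternion ℝ) 1 := by
    rw [mem_sphere_zero_iff_norm]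
    have h1 : normSq Y = 1 := by rw [Quaternion.normSq_def', hY]; dsimp; nlinarith
    have h2 := Quaternion.normSq_eq_norm_mul_self Y
    nlinarith [norm_nonneg Y]
  -- the homomorphism to the unit sphere
  set fB : Bool → sphere (0 : Quaternion ℝ) 1 :=
    fun bb => if bb then ⟨X, hXmem⟩ else ⟨Y, hYmem⟩ with hfB
  have hrel : ∀ r ∈ torusRels q, FreeGroup.lift fB r = 1 := by
    intro r hr
    rcases Set.mem_singleton_iff.mp hr with rfl
    apply Subtype.ext
    push_cast [map_mul, map_pow, map_inv, FreeGroup.lift_apply_of, hfB]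
    simp only [if_true, if_false]
    rw [hX2, hYq]
    simp
  set ψ := PresentedGroup.toGroup hrel with hψ
  set coeM : sphere (0 : Quaternion ℝ) 1 →* Quaternion ℝ :=
    { toFun := Subtype.val, map_one' := rfl, map_mul' := fun _ _ => rfl } with hcoeM
  have hofX : coeM (ψ (PresentedGroup.of true)) = X := by
    rw [hψ, PresentedGroup.toGroup.of]; simp [hfB, hcoeM]; rfl
  have hofY : coeM (ψ (PresentedGroup.of false)) = Y := by
    rw [hψ, PresentedGroup.toGroup.of]; simp [hfB, hcoeM]; rfl
  have hnorm : ∀ g : PresentedGroup (torusRels q), ‖coeM (ψ g)‖ = 1 := fun g => by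
    have := mem_sphere_zero_iff_norm.mp (ψ g).2
    exact this
  refine ⟨coeM.comp ψ, ?_, ?_, ?_, ?_⟩
  · exact hofX.trans (by rw [hX])
  · exact hofY.trans (by rw [hY, hc, hsdef, ha, hbdef, hθ])
  · exact fun g => hnorm g
  · intro H
    have hXY := H (PresentedGroup.of true) (PresentedGroup.of false)
    have hXY' : X * Y = Y * X := by
      rw [← hofX, ← hofY]
      exact hXY
    have hk := congrArg QuaternionAlgebra.imK hXY'
    rw [hX, hY] at hk
    change ((⟨0, 1, 0, 0⟩ : Quaternion ℝ) * ⟨c, s * a, s * b, 0⟩).imK = ((⟨c, s * a, s * b, 0⟩ : Quaternion ℝ) * ⟨0, 1, 0, 0⟩).imK at hk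
    simp [Quaternion.imK_mul, QuaternionAlgebra.mk_mul_mk] at hk
    nlinarith
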